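/- Suppose Assumption 1 holds with parameters m, r, n1, n2 (with r < m), and let G be the Gram matrix of the data with zeroed diagonal. Let the i-th column of D be an inlier and the (n1+j)-th column be an outlier. If (n1/r)·(1 − 2r²/m) > n2/m + 1/r, then E‖g_i‖₂² > 2·E‖g_{n1+j}‖₂². -/

import Mathlib

noncomputable section

/-- A measurable-space structure on matrices (as functions of two indices). -/
instance matrixMeasurableSpace {l n α : Type*} [MeasurableSpace α] :
    MeasurableSpace (Matrix l n α) :=
  inferInstanceAs (MeasurableSpace (l → n → α))

/-- `μ` is the uniform distribution on the unit sphere `S^{N-1}` of `ℝ^N`: the unique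
probability measure supported on the unit sphere which is invariant under every
orthogonal transformation. -/
def IsUniformOnSphere {N : ℕ} (μ : MeasureTheory.Measure (Fin N → ℝ)) : Prop :=
  MeasureTheory.IsProbabilityMeasure μ ∧ (∀ᵐ x ∂μ, ∑ i, x i ^ 2 = 1) ∧
    ∀ Q : Matrix (Fin N) (Fin N) ℝ, Q.transpose * Q = 1 → μ.map Q.mulVec = μ

/-- `ν` is the Haar (uniform) distribution on the orthogonal group `O(m)`: the unique
probability measure supported on orthogonal matrices which is invariant under left
multiplication by any orthogonal matrix. -/
def IsHaarOrthogonal {m : ℕ} (ν : MeasureTheory.Measure (Matrix (Fin m) (Fin m) ℝ)) : Prop :=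
  MeasureTheory.IsProbabilityMeasure ν ∧ (∀ᵐ Q ∂ν, Q.transpose * Q = 1) ∧
    ∀ R : Matrix (Fin m) (Fin m) ℝ, R.transpose * R = 1 → ν.map (fun Q => R * Q) = ν

/-- Zero-padding embedding of `ℝ^r` into `ℝ^m`, whose image is the fixed
`r`-dimensional coordinate subspace of `ℝ^m`. -/
def pad (r m : ℕ) (x : Fin r → ℝ) : Fin m → ℝ :=
  fun j => if h : (j : ℕ) < r then x ⟨j, h⟩ else 0

/-- Index type for the independent random sources in Assumption 1. -/
def A1Idx (n1 n2 : ℕ) : Type := Option (Fin n1 ⊕ Fin n2)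

/-- Codomains of the independent random sources in Assumption 1. -/
def A1cod (m r n1 n2 : ℕ) : A1Idx n1 n2 → Type
  | none => Matrix (Fin m) (Fin m) ℝ
  | some (Sum.inl _) => Fin r → ℝ
  | some (Sum.inr _) => Fin m → ℝ

instance A1codMeas (m r n1 n2 : ℕ) (k : A1Idx n1 n2) : MeasurableSpace (A1cod m r n1 n2 k) :=
  match k with
  | none => inferInstanceAs (MeasurableSpace (Matrix (Fin m) (Fin m) ℝ))
  | some (Sum.inl _) => inferInstanceAs (MeasurableSpace (Fin r → ℝ))
  | some (Sum.inr _) => inferInstanceAs (MeasurableSpace (Fin m → ℝ))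

/-- **Assumption 1** of the paper. The random `r`-dimensional subspace `U` of `ℝ^m` is the
image of the fixed coordinate `r`-subspace under a Haar-random orthogonal matrix `O`.
The `n1` inliers (columns of `A`) are `aᵢ = O ⬝ pad yᵢ` with the `yᵢ` i.i.d. uniform on the
unit sphere of `ℝ^r` (hence each `aᵢ` is uniform on `S^{m-1} ∩ U`); the `n2` outliers
(columns of `B`) are i.i.d. uniform on `S^{m-1}`; and `O`, the `yᵢ`'s and the `bⱼ`'s
are jointly independent. The data matrix is `D = [A B]`. -/
structure Assumption1 (m r n1 n2 : ℕ) where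
  Ω : Type
  [mΩ : MeasurableSpace Ω]
  P : MeasureTheory.Measure Ω
  prob : MeasureTheory.IsProbabilityMeasure P
  O : Ω → Matrix (Fin m) (Fin m) ℝ
  y : Fin n1 → Ω → Fin r → ℝ
  b : Fin n2 → Ω → Fin m → ℝ
  measO : Measurable O
  measy : ∀ i, Measurable (y i)
  measb : ∀ j, Measurable (b j)
  lawO : IsHaarOrthogonal (P.map O)
  lawy : ∀ i, IsUniformOnSphere (P.map (y i))
  lawb : ∀ j, IsUniformOnSphere (P.map (b j))
  indep : ProbabilityTheory.iIndepFun (m := A1codMeas m r n1 n2)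
    (fun k => match k with
      | none => O
      | some (Sum.inl i) => y i
      | some (Sum.inr j) => b j) P

variable {m r n1 n2 : ℕ}

/-- The `i`-th inlier `aᵢ`: a uniformly random unit vector of the random subspace `U`. -/
def Assumption1.inlier (M : Assumption1 m r n1 n2) (i : Fin n1) (ω : M.Ω) : Fin m → ℝ :=
  (M.O ω).mulVec (pad r m (M.y i ω))

/-- The `k`-th column of the data matrix `D = [A B]`. -/
def Assumption1.col (M : Assumption1 m r n1 n2) (k : Fin (n1 + n2)) (ω : M.Ω) : Fin m → ℝ :=
  if h : (k : ℕ) < n1 then M.inlier ⟨k, h⟩ ω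
  else M.b ⟨(k : ℕ) - n1, by have := k.isLt; omega⟩ ω

/-- `‖g_k‖₁`: the `ℓ₁`-norm of the `k`-th column of the Gram matrix `G = Dᵀ D`
with zeroed diagonal. -/
def Assumption1.g1 (M : Assumption1 m r n1 n2) (k : Fin (n1 + n2)) (ω : M.Ω) : ℝ :=
  ∑ l, if l = k then 0 else |∑ s, M.col l ω s * M.col k ω s|

/-- `‖g_k‖₂²`: the squared `ℓ₂`-norm of the `k`-th column of the Gram matrix `G = Dᵀ D`
with zeroed diagonal. -/
def Assumption1.g2sq (M : Assumption1 m r n1 n2) (k : Fin (n1 + n2)) (ω : M.Ω) : ℝ :=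
  ∑ l, if l = k then 0 else (∑ s, M.col l ω s * M.col k ω s) ^ 2


open MeasureTheory ProbabilityTheory

section Aux

instance matrixMSC {k : ℕ} : MeasurableSingletonClass (Matrix (Fin k) (Fin k) ℝ) :=
  inferInstanceAs (MeasurableSingletonClass (Fin k → Fin k → ℝ))

lemma measurable_mulVec' {N : ℕ} (Q : Matrix (Fin N) (Fin N) ℝ) : Measurable Q.mulVec := by
  apply measurable_pi_lambda
  intro i
  simp only [Matrix.mulVec, dotProduct]
  exact Finset.measurable_sum _ fun j _ => (measurable_pi_apply j).const_mul _

def permMat {N : ℕ} (σ : Equiv.Perm (Fin N)) : Matrix (Fin N) (Fin N) ℝ :=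
  Matrix.of fun i j => if σ i = j then (1:ℝ) else 0

lemma permMat_orth {N : ℕ} (σ : Equiv.Perm (Fin N)) :
    (permMat σ).transpose * (permMat σ) = 1 := by
  ext j k
  simp only [Matrix.mul_apply, Matrix.transpose_apply, Matrix.one_apply, permMat, Matrix.of_apply]
  rw [Finset.sum_eq_single (σ.symm j)]
  · simp [Equiv.apply_symm_apply, eq_comm]
  · intro b _ hb
    have : σ b ≠ j := fun h => hb (by simp [← h])
    simp [this]
  · simp

lemma permMat_mulVec {N : ℕ} (σ : Equiv.Perm (Fin N)) (x : Fin N → ℝ) :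
    (permMat σ).mulVec x = fun i => x (σ i) := by
  funext i
  simp only [Matrix.mulVec, dotProduct, permMat, Matrix.of_apply, ite_mul, one_mul,
    zero_mul]
  simp

lemma sphere_moment {N : ℕ} (hN : 0 < N) {μ : MeasureTheory.Measure (Fin N → ℝ)}
    (hμ : IsUniformOnSphere μ) (s t : Fin N) :
    ∫ x, x s * x t ∂μ = if s = t then (1:ℝ)/N else 0 := by
  obtain ⟨hprob, hsph, hinv⟩ := hμ
  have hmeas : ∀ u v : Fin N, Measurable fun x : Fin N → ℝ => x u * x v := fun u v =>
    (measurable_pi_apply u).mul (measurable_pi_apply v)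
  have hbd : ∀ᵐ x ∂μ, ∀ u : Fin N, |x u| ≤ 1 := by
    filter_upwards [hsph] with x hx u
    rw [abs_le_one_iff_mul_self_le_one, ← sq]
    calc x u ^ 2 ≤ ∑ i, x i ^ 2 := Finset.single_le_sum (f := fun i => x i ^ 2)
          (fun i _ => sq_nonneg _) (Finset.mem_univ u)
    _ = 1 := hx
  have hint : ∀ u v : Fin N, Integrable (fun x : Fin N → ℝ => x u * x v) μ := by
    intro u v
    refine Integrable.mono' (integrable_const 1) (hmeas u v).aestronglyMeasurable ?_
    filter_upwards [hbd] with x hx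
    rw [Real.norm_eq_abs, abs_mul]
    exact mul_le_one₀ (hx u) (abs_nonneg _) (hx v)
  have key : ∀ (Q : Matrix (Fin N) (Fin N) ℝ), Q.transpose * Q = 1 → ∀ u v : Fin N,
      ∫ x, x u * x v ∂μ = ∫ x, (Q.mulVec x) u * (Q.mulVec x) v ∂μ := by
    intro Q hQ u v
    conv_lhs => rw [← hinv Q hQ]
    rw [integral_map (measurable_mulVec' Q).aemeasurable (hmeas u v).aestronglyMeasurable]
  rcases eq_or_ne s t with rfl | hst
  · simp only [if_pos rfl]
    have hall : ∀ u : Fin N, ∫ x, x u * x u ∂μ = ∫ x, x s * x s ∂μ := by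
      intro u
      have := key (permMat (Equiv.swap u s)) (permMat_orth _) u u
      rw [this]
      simp [permMat_mulVec, Equiv.swap_apply_left]
    have hsum : ∑ u : Fin N, ∫ x, x u * x u ∂μ = 1 := by
      rw [← integral_finset_sum _ (fun u _ => hint u u)]
      have : ∫ x, (1:ℝ) ∂μ = 1 := by simp
      rw [← this]
      apply integral_congr_ae
      filter_upwards [hsph] with x hx
      simpa [sq] using hx
    have : (N : ℝ) * ∫ x, x s * x s ∂μ = 1 := by
      rw [← hsum, Finset.sum_congr rfl (fun u _ => hall u)]
      simp [Finset.card_univ, mul_comm]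
    field_simp at this ⊢
    rw [if_pos trivial, eq_div_iff (by positivity)]
    linarith
  · simp only [if_neg hst]
    set Q : Matrix (Fin N) (Fin N) ℝ := Matrix.diagonal (fun j => if j = s then -1 else 1)
      with hQdef
    have hQ : Q.transpose * Q = 1 := by
      rw [hQdef, Matrix.diagonal_transpose, Matrix.diagonal_mul_diagonal]
      have : (fun j => (if j = s then (-1:ℝ) else 1) * (if j = s then -1 else 1))
          = fun _ => (1:ℝ) := by
        funext j
        by_cases h : j = s <;> simp [h]
      rw [this, Matrix.diagonal_one]
    have h1 := key Q hQ s t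
    have h2 : ∀ x : Fin N → ℝ, (Q.mulVec x) s * (Q.mulVec x) t = -(x s * x t) := by
      intro x
      rw [hQdef]
      simp [Matrix.mulVec_diagonal, hst, Ne.symm hst]
    simp_rw [h2] at h1
    rw [integral_neg] at h1
    linarith

lemma dot_sq_moment {N : ℕ} (hN : 0 < N) {Ω : Type} [MeasurableSpace Ω]
    {P : MeasureTheory.Measure Ω} [IsProbabilityMeasure P] {X Y : Ω → Fin N → ℝ}
    (hX : Measurable X) (hY : Measurable Y)
    (hind : IndepFun X Y P) (hXs : ∀ᵐ ω ∂P, ∑ s, X ω s ^ 2 = 1)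
    (hYlaw : IsUniformOnSphere (P.map Y)) :
    ∫ ω, (∑ s, X ω s * Y ω s) ^ 2 ∂P = 1 / N := by
  have hsphset : MeasurableSet {x : Fin N → ℝ | ∑ i, x i ^ 2 = 1} := by
    have hm : Measurable fun x : Fin N → ℝ => ∑ i, x i ^ 2 :=
      Finset.measurable_sum _ fun i _ => (measurable_pi_apply i).pow_const 2
    exact hm (measurableSet_singleton 1)
  have hYs : ∀ᵐ ω ∂P, ∑ s, Y ω s ^ 2 = 1 :=
    (MeasureTheory.ae_map_iff hY.aemeasurable hsphset).mp hYlaw.2.1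
  have hbd : ∀ {Z : Ω → Fin N → ℝ}, (∀ᵐ ω ∂P, ∑ s, Z ω s ^ 2 = 1) →
      ∀ᵐ ω ∂P, ∀ u, |Z ω u| ≤ 1 := by
    intro Z hZ
    filter_upwards [hZ] with ω hω u
    rw [abs_le_one_iff_mul_self_le_one, ← sq]
    calc Z ω u ^ 2 ≤ ∑ i, Z ω i ^ 2 :=
      Finset.single_le_sum (f := fun i => Z ω i ^ 2) (fun i _ => sq_nonneg _) (Finset.mem_univ u)
    _ = 1 := hω
  have hXbd := hbd hXs
  have hYbd := hbd hYs
  have hφ : ∀ u v : Fin N, Measurable fun x : Fin N → ℝ => x u * x v := fun u v =>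
    (measurable_pi_apply u).mul (measurable_pi_apply v)
  have hmc : ∀ u v : Fin N, Measurable fun ω => X ω u * X ω v * (Y ω u * Y ω v) :=
    fun u v => (((hφ u v).comp hX).mul ((hφ u v).comp hY))
  have hint : ∀ u v : Fin N, Integrable (fun ω => X ω u * X ω v * (Y ω u * Y ω v)) P := by
    intro u v
    refine Integrable.mono' (integrable_const 1) (hmc u v).aestronglyMeasurable ?_
    filter_upwards [hXbd, hYbd] with ω h1 h2
    rw [Real.norm_eq_abs, abs_mul, abs_mul, abs_mul]
    exact mul_le_one₀ (mul_le_one₀ (h1 u) (abs_nonneg _) (h1 v))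
      (mul_nonneg (abs_nonneg _) (abs_nonneg _)) (mul_le_one₀ (h2 u) (abs_nonneg _) (h2 v))
  have expand : ∀ ω, (∑ s, X ω s * Y ω s) ^ 2 = ∑ s, ∑ t, X ω s * X ω t * (Y ω s * Y ω t) := by
    intro ω
    rw [sq, Finset.sum_mul_sum]
    exact Finset.sum_congr rfl fun s _ => Finset.sum_congr rfl fun t _ => by ring
  simp_rw [expand]
  rw [integral_finset_sum _ (fun s _ => integrable_finset_sum _ (fun t _ => hint s t))]
  have hterm : ∀ s t : Fin N, ∫ ω, X ω s * X ω t * (Y ω s * Y ω t) ∂P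
      = (∫ ω, X ω s * X ω t ∂P) * (if s = t then (1:ℝ)/N else 0) := by
    intro s t
    have hiF : IndepFun (fun ω => X ω s * X ω t) (fun ω => Y ω s * Y ω t) P :=
      hind.comp (hφ s t) (hφ s t)
    have := hiF.integral_fun_mul_eq_mul_integral (((hφ s t).comp hX).aestronglyMeasurable)
      (((hφ s t).comp hY).aestronglyMeasurable)
    rw [this]
    congr 1
    rw [← sphere_moment hN hYlaw s t,
      integral_map hY.aemeasurable (hφ s t).aestronglyMeasurable]
  calc ∑ s, ∫ ω, ∑ t, X ω s * X ω t * (Y ω s * Y ω t) ∂P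
      = ∑ s : Fin N, ∑ t : Fin N, (∫ ω, X ω s * X ω t ∂P) * (if s = t then (1:ℝ)/N else 0) := by
        refine Finset.sum_congr rfl fun s _ => ?_
        rw [integral_finset_sum _ (fun t _ => hint s t)]
        exact Finset.sum_congr rfl fun t _ => hterm s t
    _ = ∑ s : Fin N, (∫ ω, X ω s * X ω s ∂P) * ((1:ℝ)/N) := by
        refine Finset.sum_congr rfl fun s _ => ?_
        rw [Finset.sum_eq_single s] <;> simp +contextual [eq_comm]
    _ = (∑ s : Fin N, ∫ ω, X ω s * X ω s ∂P) * ((1:ℝ)/N) := by rw [Finset.sum_mul]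
    _ = 1 / N := by
        have hintX : ∀ s : Fin N, Integrable (fun ω => X ω s * X ω s) P := by
          intro s
          refine Integrable.mono' (integrable_const 1)
            ((hφ s s).comp hX).aestronglyMeasurable ?_
          filter_upwards [hXbd] with ω h1
          rw [Real.norm_eq_abs, abs_mul]
          exact mul_le_one₀ (h1 s) (abs_nonneg _) (h1 s)
        rw [← integral_finset_sum _ (fun s _ => hintX s)]
        have h2 : ∫ ω, ∑ s, X ω s * X ω s ∂P = 1 := by
          have h1 : ∫ ω, (1:ℝ) ∂P = 1 := by simp
          rw [← h1]
          apply integral_congr_ae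
          filter_upwards [hXs] with ω hω
          simpa [sq] using hω
        rw [h2, one_mul]

lemma measurable_pad (r m : ℕ) : Measurable (pad r m) := by
  apply measurable_pi_lambda
  intro j
  unfold pad
  split
  · exact measurable_pi_apply _
  · exact measurable_const

lemma pad_dot {r m : ℕ} (h : r ≤ m) (x z : Fin r → ℝ) :
    ∑ j : Fin m, pad r m x j * pad r m z j = ∑ s : Fin r, x s * z s := by
  classical
  have key : ∑ j ∈ Finset.univ.image (Fin.castLE h), pad r m x j * pad r m z j
      = ∑ s : Fin r, x s * z s := by
    rw [Finset.sum_image (fun a _ b _ hab => Fin.castLE_injective h hab)]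
    refine Finset.sum_congr rfl fun s _ => ?_
    have h1 : ((Fin.castLE h s : Fin m) : ℕ) < r := by simp
    simp [pad, h1, Fin.ext_iff]
  rw [← key]
  refine (Finset.sum_subset (Finset.subset_univ _) ?_).symm
  intro j _ hj
  have hnot : ¬ (j : ℕ) < r := by
    intro hc
    exact hj (Finset.mem_image.2 ⟨⟨(j : ℕ), hc⟩, Finset.mem_univ _, by simp [Fin.ext_iff]⟩)
  simp [pad, hnot]

lemma mulVec_dot {N : ℕ} {Q : Matrix (Fin N) (Fin N) ℝ} (hQ : Q.transpose * Q = 1)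
    (u v : Fin N → ℝ) :
    ∑ s, Q.mulVec u s * Q.mulVec v s = ∑ s, u s * v s := by
  have h1 : ∑ s, Q.mulVec u s * Q.mulVec v s = dotProduct (Q.mulVec u) (Q.mulVec v) := rfl
  rw [h1, Matrix.dotProduct_mulVec, ← Matrix.transpose_transpose Q, Matrix.vecMul_transpose,
    Matrix.mulVec_mulVec, Matrix.transpose_transpose, hQ, Matrix.one_mulVec]
  rfl

variable {m r n1 n2 : ℕ}

lemma measurable_mulVec_pair {α : Type*} [MeasurableSpace α] {O : α → Matrix (Fin m) (Fin m) ℝ}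
    {v : α → Fin m → ℝ} (hO : Measurable O) (hv : Measurable v) :
    Measurable fun a => (O a).mulVec (v a) := by
  apply measurable_pi_lambda
  intro i
  simp only [Matrix.mulVec, dotProduct]
  apply Finset.measurable_sum
  intro j _
  exact ((measurable_pi_apply j).comp ((measurable_pi_apply i).comp hO)).mul
    ((measurable_pi_apply j).comp hv)

lemma sphereSet_meas (N : ℕ) : MeasurableSet {x : Fin N → ℝ | ∑ i, x i ^ 2 = 1} := by
  have hm : Measurable fun x : Fin N → ℝ => ∑ i, x i ^ 2 :=
    Finset.measurable_sum _ fun i _ => (measurable_pi_apply i).pow_const 2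
  exact hm (measurableSet_singleton 1)

instance instA1MeasurableSpace (M : Assumption1 m r n1 n2) : MeasurableSpace M.Ω := M.mΩ

namespace Assumption1

variable (M : Assumption1 m r n1 n2)

lemma measurable_inlier (ii : Fin n1) : Measurable (M.inlier ii) := by
  exact measurable_mulVec_pair M.measO ((measurable_pad r m).comp (M.measy ii))

lemma measurable_col (k : Fin (n1 + n2)) : Measurable (M.col k) := by
  unfold Assumption1.col
  split
  · exact M.measurable_inlier _
  · exact M.measb _

lemma ae_orth : ∀ᵐ ω ∂M.P, (M.O ω).transpose * M.O ω = 1 := by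
  have hOmeas : Measurable fun Q : Matrix (Fin m) (Fin m) ℝ => Q.transpose * Q := by
    apply measurable_pi_lambda
    intro i
    apply measurable_pi_lambda
    intro j
    have : (fun Q : Matrix (Fin m) (Fin m) ℝ => (Q.transpose * Q) i j)
        = fun Q => ∑ k, Q k i * Q k j := by
      funext Q
      simp [Matrix.mul_apply, Matrix.transpose_apply]
    rw [this]
    exact Finset.measurable_sum _ fun k _ =>
      Measurable.mul (f := fun Q : Matrix (Fin m) (Fin m) ℝ => Q k i) (g := fun Q => Q k j)
        ((measurable_pi_apply i).comp (measurable_pi_apply k))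
        ((measurable_pi_apply j).comp (measurable_pi_apply k))
  have hset : MeasurableSet {Q : Matrix (Fin m) (Fin m) ℝ | Q.transpose * Q = 1} :=
    hOmeas (measurableSet_singleton 1)
  exact (MeasureTheory.ae_map_iff M.measO.aemeasurable hset).mp M.lawO.2.1

lemma ae_y_sphere (ii : Fin n1) : ∀ᵐ ω ∂M.P, ∑ s, M.y ii ω s ^ 2 = 1 := by
  exact (MeasureTheory.ae_map_iff (M.measy ii).aemeasurable (sphereSet_meas r)).mp (M.lawy ii).2.1

lemma ae_b_sphere (jj : Fin n2) : ∀ᵐ ω ∂M.P, ∑ s, M.b jj ω s ^ 2 = 1 := by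
  exact (MeasureTheory.ae_map_iff (M.measb jj).aemeasurable (sphereSet_meas m)).mp (M.lawb jj).2.1

lemma ae_inlier_dot (hrm : r ≤ m) (i1 i2 : Fin n1) :
    ∀ᵐ ω ∂M.P, ∑ s, M.inlier i1 ω s * M.inlier i2 ω s = ∑ s, M.y i1 ω s * M.y i2 ω s := by
  filter_upwards [M.ae_orth] with ω hω
  unfold Assumption1.inlier
  rw [mulVec_dot hω, pad_dot hrm]

lemma ae_inlier_sphere (hrm : r ≤ m) (ii : Fin n1) :
    ∀ᵐ ω ∂M.P, ∑ s, M.inlier ii ω s ^ 2 = 1 := by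
  filter_upwards [M.ae_inlier_dot hrm ii ii, M.ae_y_sphere ii] with ω h1 h2
  simp only [sq] at h2 ⊢
  rw [h1]
  exact h2

lemma ae_col_sphere (hrm : r ≤ m) (k : Fin (n1 + n2)) :
    ∀ᵐ ω ∂M.P, ∑ s, M.col k ω s ^ 2 = 1 := by
  unfold Assumption1.col
  split
  · exact M.ae_inlier_sphere hrm _
  · exact M.ae_b_sphere _

lemma integrable_colprod (hrm : r ≤ m) (l k : Fin (n1 + n2)) :
    Integrable (fun ω => (∑ s, M.col l ω s * M.col k ω s) ^ 2) M.P := by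
  haveI := M.prob
  have hm : Measurable fun ω => (∑ s, M.col l ω s * M.col k ω s) ^ 2 :=
    (Finset.measurable_sum _ fun s _ =>
      ((measurable_pi_apply s).comp (M.measurable_col l)).mul
        ((measurable_pi_apply s).comp (M.measurable_col k))).pow_const 2
  refine Integrable.mono' (integrable_const 1) hm.aestronglyMeasurable ?_
  filter_upwards [M.ae_col_sphere hrm l, M.ae_col_sphere hrm k] with ω h1 h2
  rw [Real.norm_eq_abs, abs_of_nonneg (sq_nonneg _)]
  calc (∑ s, M.col l ω s * M.col k ω s) ^ 2
      ≤ (∑ s, M.col l ω s ^ 2) * ∑ s, M.col k ω s ^ 2 :=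
        Finset.sum_mul_sq_le_sq_mul_sq _ _ _
    _ = 1 := by rw [h1, h2, one_mul]

/-- the key per-pair second moment computation -/
lemma pair_moment (hr : 0 < r) (hrm : r < m) (l k : Fin (n1 + n2)) (hlk : l ≠ k) :
    ∫ ω, (∑ s, M.col l ω s * M.col k ω s) ^ 2 ∂M.P
      = if (l : ℕ) < n1 ∧ (k : ℕ) < n1 then 1/(r:ℝ) else 1/(m:ℝ) := by
  haveI := M.prob
  have hm0 : 0 < m := lt_of_le_of_lt (Nat.zero_le r) hrm
  have measAll : ∀ kk : A1Idx n1 n2,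
      Measurable ((fun k => match k with
        | none => M.O
        | some (Sum.inl i) => M.y i
        | some (Sum.inr j) => M.b j :
        (k : A1Idx n1 n2) → M.Ω → A1cod m r n1 n2 k) kk) := by
    intro kk
    cases kk with
    | none => exact M.measO
    | some s =>
      cases s with
      | inl l => exact M.measy l
      | inr l => exact M.measb l
  by_cases hl : (l : ℕ) < n1
  · by_cases hk : (k : ℕ) < n1
    · -- both inliers
      rw [if_pos ⟨hl, hk⟩]
      have hne : (⟨(l : ℕ), hl⟩ : Fin n1) ≠ ⟨(k : ℕ), hk⟩ := by
        intro h
        have hv : (l : ℕ) = (k : ℕ) := by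
          simpa using congrArg Fin.val h
        exact hlk (Fin.ext hv)
      have hswap : ∫ ω, (∑ s, M.col l ω s * M.col k ω s) ^ 2 ∂M.P
          = ∫ ω, (∑ s, M.y ⟨(l : ℕ), hl⟩ ω s * M.y ⟨(k : ℕ), hk⟩ ω s) ^ 2 ∂M.P := by
        apply integral_congr_ae
        filter_upwards [M.ae_inlier_dot (le_of_lt hrm) ⟨(l : ℕ), hl⟩ ⟨(k : ℕ), hk⟩] with ω hω
        simp only [Assumption1.col, dif_pos hl, dif_pos hk]
        rw [hω]
      rw [hswap]
      exact dot_sq_moment hr (M.measy _) (M.measy _)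
        (M.indep.indepFun (i := some (Sum.inl ⟨(l : ℕ), hl⟩))
          (j := some (Sum.inl ⟨(k : ℕ), hk⟩))
          (fun hc => hne (Sum.inl.inj (Option.some.inj hc))))
        (M.ae_y_sphere _) (M.lawy _)
    · -- l inlier, k outlier
      rw [if_neg (fun h => hk h.2)]
      have hswap : ∫ ω, (∑ s, M.col l ω s * M.col k ω s) ^ 2 ∂M.P
          = ∫ ω, (∑ s, M.inlier ⟨(l : ℕ), hl⟩ ω s
              * M.b ⟨(k : ℕ) - n1, by have := k.isLt; omega⟩ ω s) ^ 2 ∂M.P := by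
        apply integral_congr_ae
        apply Filter.Eventually.of_forall
        intro ω
        simp only [Assumption1.col, dif_pos hl, dif_neg hk]
      rw [hswap]
      have hindep : IndepFun (M.inlier ⟨(l : ℕ), hl⟩)
          (M.b ⟨(k : ℕ) - n1, by have := k.isLt; omega⟩) M.P := by
        have hpair := M.indep.indepFun_prodMk measAll none (some (Sum.inl ⟨(l : ℕ), hl⟩))
          (some (Sum.inr ⟨(k : ℕ) - n1, by have := k.isLt; omega⟩))
          (fun hc => by cases hc)
          (fun hc => by cases hc)
        have hφm : Measurable fun p : Matrix (Fin m) (Fin m) ℝ × (Fin r → ℝ) =>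
            p.1.mulVec (pad r m p.2) :=
          measurable_mulVec_pair measurable_fst ((measurable_pad r m).comp measurable_snd)
        exact hpair.comp hφm measurable_id
      exact dot_sq_moment hm0 (M.measurable_inlier _) (M.measb _) hindep
        (M.ae_inlier_sphere (le_of_lt hrm) _) (M.lawb _)
  · -- l outlier
    rw [if_neg (fun h => hl h.1)]
    have hlge := l.isLt
    by_cases hk : (k : ℕ) < n1
    · -- k inlier, l outlier : swap order of product
      have hswap : ∫ ω, (∑ s, M.col l ω s * M.col k ω s) ^ 2 ∂M.P
          = ∫ ω, (∑ s, M.inlier ⟨(k : ℕ), hk⟩ ω s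
              * M.b ⟨(l : ℕ) - n1, by omega⟩ ω s) ^ 2 ∂M.P := by
        apply integral_congr_ae
        apply Filter.Eventually.of_forall
        intro ω
        simp only [Assumption1.col, dif_pos hk, dif_neg hl]
        congr 1
        exact Finset.sum_congr rfl fun s _ => mul_comm _ _
      rw [hswap]
      have hindep : IndepFun (M.inlier ⟨(k : ℕ), hk⟩)
          (M.b ⟨(l : ℕ) - n1, by omega⟩) M.P := by
        have hpair := M.indep.indepFun_prodMk measAll none (some (Sum.inl ⟨(k : ℕ), hk⟩))
          (some (Sum.inr ⟨(l : ℕ) - n1, by omega⟩))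
          (fun hc => by cases hc)
          (fun hc => by cases hc)
        have hφm : Measurable fun p : Matrix (Fin m) (Fin m) ℝ × (Fin r → ℝ) =>
            p.1.mulVec (pad r m p.2) :=
          measurable_mulVec_pair measurable_fst ((measurable_pad r m).comp measurable_snd)
        exact hpair.comp hφm measurable_id
      exact dot_sq_moment hm0 (M.measurable_inlier _) (M.measb _) hindep
        (M.ae_inlier_sphere (le_of_lt hrm) _) (M.lawb _)
    · -- both outliers
      have hkge := k.isLt
      have hswap : ∫ ω, (∑ s, M.col l ω s * M.col k ω s) ^ 2 ∂M.P
          = ∫ ω, (∑ s, M.b ⟨(l : ℕ) - n1, by omega⟩ ω s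
              * M.b ⟨(k : ℕ) - n1, by omega⟩ ω s) ^ 2 ∂M.P := by
        apply integral_congr_ae
        apply Filter.Eventually.of_forall
        intro ω
        simp only [Assumption1.col, dif_neg hl, dif_neg hk]
      rw [hswap]
      have hne : (⟨(l : ℕ) - n1, by omega⟩ : Fin n2) ≠ ⟨(k : ℕ) - n1, by omega⟩ := by
        intro h
        have hv : (l : ℕ) - n1 = (k : ℕ) - n1 := by
          simpa using congrArg Fin.val h
        exact hlk (Fin.ext (by omega))
      exact dot_sq_moment hm0 (M.measb _) (M.measb _)
        (M.indep.indepFun (i := some (Sum.inr (⟨(l : ℕ) - n1, by omega⟩ : Fin n2)))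
          (j := some (Sum.inr (⟨(k : ℕ) - n1, by omega⟩ : Fin n2)))
          (fun hc => hne (Sum.inr.inj (Option.some.inj hc))))
        (M.ae_b_sphere _) (M.lawb _)

end Assumption1

lemma final_arith {r m n1 n2 : ℕ} (hr : 0 < r) (hrm : r < m)
    (hcond : (n1 : ℝ) / r * (1 - 2 * r ^ 2 / m) > (n2 : ℝ) / m + 1 / r) :
    (n1 : ℝ) * (1/r) - 1/r + n2 * (1/m)
      > 2 * ((n1 + n2 : ℝ) * (1/m) - 1/m) := by
  have hr' : (1:ℝ) ≤ r := by exact_mod_cast hr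
  have hr0 : (0:ℝ) < r := by positivity
  have hm0 : (0:ℝ) < m := by exact_mod_cast lt_of_le_of_lt (Nat.zero_le r) hrm
  have hn1 : (0:ℝ) ≤ n1 := Nat.cast_nonneg n1
  have hkey : (n1 : ℝ) * (m - 2 * r ^ 2) > (n2 : ℝ) * r + m := by
    have h1 := mul_lt_mul_of_pos_right hcond (mul_pos hr0 hm0)
    have e1 : ((n1:ℝ)/r*(1-2*r^2/m))*(r*m) = n1*(m-2*r^2) := by
      field_simp
    have e2 : ((n2:ℝ)/m+1/r)*(r*m) = n2*r+m := by
      field_simp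
    rw [e1, e2] at h1
    exact h1
  rw [gt_iff_lt, ← sub_pos]
  have h3 : (n1 : ℝ) * (1/r) - 1/r + n2 * (1/m) - 2 * ((n1 + n2 : ℝ) * (1/m) - 1/m)
      = ((n1*m - m + n2*r) - (2*n1*r + 2*n2*r - 2*r)) / (r*m) := by
    field_simp
  rw [h3]
  apply div_pos
  · nlinarith [mul_le_mul_of_nonneg_left hr' (by positivity : (0:ℝ) ≤ 2 * n1 * r),
      mul_pos hr0 hm0, sq_nonneg ((r:ℝ) - 1)]
  · positivity

end Aux

/-- **Lemma 2** (CoP paper): under Assumption 1 with `r < m`, if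
`(n1/r)(1 − 2r²/m) > n2/m + 1/r`, then `E‖g_i‖₂² > 2 E‖g_(n1+j)‖₂²`
for any inlier index `i` and outlier index `j`. -/
theorem coherence_pursuit_lemma2 {m r n1 n2 : ℕ} (hrm : r < m)
    (M : Assumption1 m r n1 n2) (i : Fin n1) (j : Fin n2)
    (hcond : (n1 : ℝ) / r * (1 - 2 * r ^ 2 / m) > (n2 : ℝ) / m + 1 / r) :
    (∫ ω, M.g2sq ⟨i, by have := i.isLt; omega⟩ ω ∂M.P) > 2 * ∫ ω, M.g2sq ⟨n1 + j, by have := j.isLt; omega⟩ ω ∂M.P := by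
  haveI := M.prob
  have hm0 : 0 < m := lt_of_le_of_lt (Nat.zero_le r) hrm
  have hr : 0 < r := by
    by_contra h
    push_neg at h
    have hr0 : r = 0 := Nat.le_zero.mp h
    subst hr0
    rw [Nat.cast_zero, div_zero, div_zero, zero_mul] at hcond
    exact absurd hcond (not_lt.2 (by positivity))
  have hE : ∀ k : Fin (n1 + n2), ∫ ω, M.g2sq k ω ∂M.P
      = ∑ l : Fin (n1 + n2), (if l = k then (0:ℝ)
          else if (l : ℕ) < n1 ∧ (k : ℕ) < n1 then 1/(r:ℝ) else 1/(m:ℝ)) := by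
    intro k
    unfold Assumption1.g2sq
    rw [integral_finset_sum]
    · refine Finset.sum_congr rfl fun l _ => ?_
      by_cases hlk : l = k
      · simp [hlk]
      · rw [if_neg hlk]
        simp only [if_neg hlk]
        exact M.pair_moment hr hrm l k hlk
    · intro l _
      by_cases hlk : l = k
      · simp only [if_pos hlk]
        exact integrable_const 0
      · simp only [if_neg hlk]
        exact M.integrable_colprod hrm.le l k
  have sum_in : ∀ k : Fin (n1 + n2), (k : ℕ) < n1 →
      (∑ l : Fin (n1 + n2), (if l = k then (0:ℝ)
          else if (l : ℕ) < n1 ∧ (k : ℕ) < n1 then 1/(r:ℝ) else 1/(m:ℝ)))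
        = (n1:ℝ)*(1/r) - 1/r + n2*(1/m) := by
    intro k hk
    have step1 : ∀ l : Fin (n1 + n2), (if l = k then (0:ℝ)
        else if (l : ℕ) < n1 ∧ (k : ℕ) < n1 then 1/(r:ℝ) else 1/(m:ℝ))
        = (fun x : ℕ => if x = (k:ℕ) then (0:ℝ) else if x < n1 then 1/(r:ℝ) else 1/(m:ℝ))
            (l : ℕ) := by
      intro l
      simp only [Fin.ext_iff, hk, and_true]
    rw [Finset.sum_congr rfl (fun l _ => step1 l),
      Fin.sum_univ_eq_sum_range
        (fun x : ℕ => if x = (k:ℕ) then (0:ℝ) else if x < n1 then 1/(r:ℝ) else 1/(m:ℝ))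
        (n1 + n2),
      Finset.range_eq_Ico,
      ← Finset.sum_Ico_consecutive _ (Nat.zero_le n1) (Nat.le_add_right n1 n2),
      ← Finset.range_eq_Ico]
    have part1 : ∑ x ∈ Finset.range n1,
        (if x = (k:ℕ) then (0:ℝ) else if x < n1 then 1/(r:ℝ) else 1/(m:ℝ))
        = (n1:ℝ)*(1/r) - 1/r := by
      have hc : ∀ x ∈ Finset.range n1,
          (if x = (k:ℕ) then (0:ℝ) else if x < n1 then 1/(r:ℝ) else 1/(m:ℝ))
          = 1/(r:ℝ) - (if x = (k:ℕ) then 1/(r:ℝ) else 0) := by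
        intro x hx
        rw [Finset.mem_range] at hx
        by_cases hxk : x = (k:ℕ) <;> simp [hxk, hx]
      rw [Finset.sum_congr rfl hc, Finset.sum_sub_distrib, Finset.sum_const,
        Finset.sum_ite_eq' (Finset.range n1) ((k:ℕ)) (fun _ => 1/(r:ℝ)),
        if_pos (Finset.mem_range.2 hk)]
      simp [nsmul_eq_mul]
    have part2 : ∑ x ∈ Finset.Ico n1 (n1 + n2),
        (if x = (k:ℕ) then (0:ℝ) else if x < n1 then 1/(r:ℝ) else 1/(m:ℝ))
        = (n2:ℝ)*(1/m) := by
      have hc : ∀ x ∈ Finset.Ico n1 (n1 + n2),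
          (if x = (k:ℕ) then (0:ℝ) else if x < n1 then 1/(r:ℝ) else 1/(m:ℝ))
          = 1/(m:ℝ) := by
        intro x hx
        rw [Finset.mem_Ico] at hx
        have h1 : x ≠ (k:ℕ) := by omega
        have h2 : ¬ x < n1 := by omega
        simp [h1, h2]
      rw [Finset.sum_congr rfl hc, Finset.sum_const, Nat.card_Ico, Nat.add_sub_cancel_left,
        nsmul_eq_mul]
    rw [part1, part2]
  have sum_out : ∀ k : Fin (n1 + n2), ¬ ((k : ℕ) < n1) →
      (∑ l : Fin (n1 + n2), (if l = k then (0:ℝ)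
          else if (l : ℕ) < n1 ∧ (k : ℕ) < n1 then 1/(r:ℝ) else 1/(m:ℝ)))
        = ((n1:ℝ) + n2)*(1/m) - 1/m := by
    intro k hk
    have step1 : ∀ l : Fin (n1 + n2), (if l = k then (0:ℝ)
        else if (l : ℕ) < n1 ∧ (k : ℕ) < n1 then 1/(r:ℝ) else 1/(m:ℝ))
        = (fun x : ℕ => if x = (k:ℕ) then (0:ℝ) else 1/(m:ℝ)) (l : ℕ) := by
      intro l
      simp only [Fin.ext_iff, hk, and_false, if_false]
    rw [Finset.sum_congr rfl (fun l _ => step1 l),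
      Fin.sum_univ_eq_sum_range
        (fun x : ℕ => if x = (k:ℕ) then (0:ℝ) else 1/(m:ℝ)) (n1 + n2)]
    have hc : ∀ x ∈ Finset.range (n1 + n2),
        (if x = (k:ℕ) then (0:ℝ) else 1/(m:ℝ))
        = 1/(m:ℝ) - (if x = (k:ℕ) then 1/(m:ℝ) else 0) := by
      intro x _
      by_cases hxk : x = (k:ℕ) <;> simp [hxk]
    rw [Finset.sum_congr rfl hc, Finset.sum_sub_distrib, Finset.sum_const,
      Finset.sum_ite_eq' (Finset.range (n1 + n2)) ((k:ℕ)) (fun _ => 1/(m:ℝ)),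
      if_pos (Finset.mem_range.2 k.isLt), Finset.card_range, nsmul_eq_mul]
    push_cast
    ring
  rw [hE ⟨i, by have := i.isLt; omega⟩, hE ⟨n1 + j, by have := j.isLt; omega⟩,
    sum_in ⟨i, by have := i.isLt; omega⟩ (by simp),
    sum_out ⟨n1 + j, by have := j.isLt; omega⟩ (by simp)]
  exact final_arith hr hrm hcond
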